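/- Let Y be an ℕ-valued random variable with E[R^Y] ≤ M for some R > 1 and M < ∞, satisfying E[Y] ≥ 1−δ and E[Y(Y−1)] ≥ 2δ for some δ > 0. Then there exist constants c₁, ε > 0 depending only on R, M, δ such that if |E[Y] − 1| < ε, there is a unique real ρ̂ with |ρ̂| < c₁ and (1 − g_Y(1−ρ̂))/ρ̂ = 1 (interpreting the left side as E[Y] when ρ̂ = 0); moreover c·|E[Y]−1| ≤ |ρ̂| ≤ C·|E[Y]−1| for constants c, C > 0 depending only on R, M, δ, and sign(ρ̂) = sign(E[Y]−1). -/

import Mathlib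

open MeasureTheory Finset

/-- Boundedness of `n^k s^n` for `0 ≤ s < 1`. -/
lemma hY_aux_bdd (k : ℕ) {s : ℝ} (h0 : 0 ≤ s) (h1 : s < 1) :
    ∃ K > 0, ∀ n : ℕ, (n:ℝ)^k * s^n ≤ K := by
  have hs : Summable (fun n : ℕ => (n:ℝ)^k * s^n) :=
    summable_pow_mul_geometric_of_norm_lt_one k (by rwa [Real.norm_eq_abs, abs_of_nonneg h0])
  have ht : 0 ≤ ∑' n : ℕ, (n:ℝ)^k * s^n := tsum_nonneg fun n => by positivity
  refine ⟨(∑' n : ℕ, (n:ℝ)^k * s^n) + 1, by linarith, fun n => ?_⟩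
  have := Summable.le_tsum hs n (fun m _ => by positivity)
  linarith

/-- Gauss sum, real version. -/
lemma hY_aux_gauss (n : ℕ) : (∑ i ∈ range n, (i:ℝ)) = n*(n-1)/2 := by
  induction n with
  | zero => simp
  | succ m ih => rw [Finset.sum_range_succ, ih]; push_cast; ring

set_option maxHeartbeats 4000000 in
/-- Existence, uniqueness and linear-order asymptotics of the root of `h_Y(x) = 1`,
where `h_Y(x) = (1 − g_Y(1−x))/x` (interpreted as `E[Y]` at `x = 0`) and
`g_Y(y) = E[y^Y]`. Under `E[R^Y] ≤ M` (`R > 1`), `E[Y] ≥ 1−δ`, `E[Y(Y−1)] ≥ 2δ`, there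
are constants `c₁, ε, c, C > 0` depending only on `R, M, δ` such that if
`|E[Y] − 1| < ε` then there is a unique `ρ̂` with `|ρ̂| < c₁` and `h_Y(ρ̂) = 1`, it
satisfies `c|E[Y]−1| ≤ |ρ̂| ≤ C|E[Y]−1|`, and `sign ρ̂ = sign (E[Y]−1)`. -/
theorem hY_root_exists_unique (R M δ : ℝ) (hR : 1 < R) (hM : 0 < M) (hδ : 0 < δ) :
    ∃ c₁ > 0, ∃ ε > 0, ∃ c > 0, ∃ C > 0,
      ∀ (Ω : Type) (_ : MeasurableSpace Ω) (μ : Measure Ω) (_ : IsProbabilityMeasure μ)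
        (Y : Ω → ℕ),
        Measurable Y →
        Integrable (fun ω => R ^ Y ω) μ →
        (∫ ω, R ^ Y ω ∂μ) ≤ M →
        (1 - δ ≤ ∫ ω, (Y ω : ℝ) ∂μ) →
        (2 * δ ≤ ∫ ω, (Y ω : ℝ) * ((Y ω : ℝ) - 1) ∂μ) →
        |(∫ ω, (Y ω : ℝ) ∂μ) - 1| < ε →
        ∀ H : ℝ → ℝ,
          H = (fun x => if x = 0 then ∫ ω, (Y ω : ℝ) ∂μ
            else (1 - ∫ ω, (1 - x) ^ Y ω ∂μ) / x) →
          (∃! x : ℝ, |x| < c₁ ∧ H x = 1) ∧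
          ∀ x : ℝ, |x| < c₁ → H x = 1 →
            c * |(∫ ω, (Y ω : ℝ) ∂μ) - 1| ≤ |x| ∧
            |x| ≤ C * |(∫ ω, (Y ω : ℝ) ∂μ) - 1| ∧
            (0 < x ↔ 1 < ∫ ω, (Y ω : ℝ) ∂μ) ∧
            (x < 0 ↔ (∫ ω, (Y ω : ℝ) ∂μ) < 1) ∧
            (x = 0 ↔ (∫ ω, (Y ω : ℝ) ∂μ) = 1) := by
  have hR0 : (0:ℝ) < R := by linarith
  -- the radius r
  set r : ℝ := min (1/2) ((R-1)/2) with hrdef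
  have hr0 : 0 < r := lt_min (by norm_num) (by linarith)
  have hrhalf : r ≤ 1/2 := min_le_left _ _
  have hrR : 1 + r ≤ (R+1)/2 := by
    have := min_le_right (1/2 : ℝ) ((R-1)/2); linarith
  have hrR' : 1 + r < R := by linarith
  -- constants K₁, K₂
  obtain ⟨K₁, hK₁0, hK₁⟩ := hY_aux_bdd 3 (s := R⁻¹) (by positivity) (inv_lt_one_of_one_lt₀ hR)
  have hK₁' : ∀ n : ℕ, (n:ℝ)^3 ≤ K₁ * R^n := by
    intro n
    have h := hK₁ n
    have hRn : (0:ℝ) < R^n := by positivity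
    rw [inv_pow, mul_inv_le_iff₀ hRn] at h
    linarith [h]
  obtain ⟨K₂, hK₂0, hK₂⟩ := hY_aux_bdd 2 (s := (1+r)/R)
    (by positivity) ((div_lt_one hR0).mpr hrR')
  have hK₂' : ∀ n : ℕ, (n:ℝ)^2 * (1+r)^n ≤ K₂ * R^n := by
    intro n
    have h := hK₂ n
    have hRn : (0:ℝ) < R^n := by positivity
    rw [div_pow] at h
    have h2 := mul_le_mul_of_nonneg_right h hRn.le
    have e : (n:ℝ)^2 * ((1+r)^n / R^n) * R^n = (n:ℝ)^2 * (1+r)^n := by field_simp; try ring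
    linarith
  -- the constants of the theorem
  set c₁ : ℝ := min r (δ / (2 * K₁ * M)) with hc₁def
  have hc₁0 : 0 < c₁ := lt_min hr0 (by positivity)
  have hc₁r : c₁ ≤ r := min_le_left _ _
  have hc₁half : c₁ ≤ 1/2 := hc₁r.trans hrhalf
  have hc₁δ : c₁ * (K₁ * M) ≤ δ / 2 := by
    have h := min_le_right r (δ / (2 * K₁ * M))
    have hKM : 0 < K₁ * M := by positivity
    calc c₁ * (K₁ * M) ≤ (δ / (2 * K₁ * M)) * (K₁ * M) :=
          mul_le_mul_of_nonneg_right h hKM.le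
      _ = δ / 2 := by field_simp
  set L : ℝ := K₂ * M with hLdef
  have hL0 : 0 < L := by positivity
  refine ⟨c₁, hc₁0, δ * c₁ / 4, by positivity, 1/L, by positivity, 2/δ, by positivity, ?_⟩
  intro Ω mΩ μ hprob Y hYmeas hRint hRM hEY hYY1 hmε H hH
  set m := ∫ ω, (Y ω : ℝ) ∂μ with hmdef
  clear_value m
  -- integrability machinery
  have hmeasφ : ∀ φ : ℕ → ℝ, AEStronglyMeasurable (fun ω => φ (Y ω)) μ :=
    fun φ => (measurable_from_top.comp hYmeas).aestronglyMeasurable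
  have hintφ : ∀ (φ : ℕ → ℝ) (K : ℝ), (∀ n, |φ n| ≤ K * R^n) →
      Integrable (fun ω => φ (Y ω)) μ := by
    intro φ K hφ
    exact (hRint.const_mul K).mono' (hmeasφ φ)
      (ae_of_all _ fun ω => by simpa [Real.norm_eq_abs] using hφ (Y ω))
  -- the function G
  set f : ℝ → Ω → ℝ := fun x ω => ∑ j ∈ range (Y ω), (1-x)^j with hfdef
  set G : ℝ → ℝ := fun x => ∫ ω, f x ω ∂μ with hGdef
  have h1r : (1:ℝ) ≤ 1 + r := by linarith
  have h1c₁ : (0:ℝ) ≤ 1 - c₁ := by linarith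
  -- bound |1 - z| for z ∈ [-c₁, c₁]
  have habs : ∀ z ∈ Set.Icc (-c₁) c₁, 1 - c₁ ≤ 1 - z ∧ 1 - z ≤ 1 + r := by
    rintro z ⟨h1, h2⟩; constructor <;> linarith
  -- integrability of f x
  have hintf : ∀ x ∈ Set.Icc (-c₁) c₁, Integrable (f x) μ := by
    intro x hx
    refine hintφ (fun n => ∑ j ∈ range n, (1-x)^j) K₂ ?_
    intro n
    obtain ⟨hz1, hz2⟩ := habs x hx
    have hz0 : 0 ≤ 1 - x := le_trans h1c₁ hz1
    calc |∑ j ∈ range n, (1-x)^j| ≤ ∑ j ∈ range n, |(1-x)^j| := Finset.abs_sum_le_sum_abs _ _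
      _ ≤ ∑ j ∈ range n, (1+r)^n := by
          refine Finset.sum_le_sum fun j hj => ?_
          rw [abs_pow, abs_of_nonneg hz0]
          calc (1-x)^j ≤ (1+r)^j := pow_le_pow_left₀ hz0 hz2 j
            _ ≤ (1+r)^n := pow_le_pow_right₀ h1r (Finset.mem_range.mp hj).le
      _ = (n:ℝ) * (1+r)^n := by rw [Finset.sum_const, Finset.card_range, nsmul_eq_mul]
      _ ≤ (n:ℝ)^2 * (1+r)^n := by
          have : (n:ℝ) ≤ (n:ℝ)^2 := by exact_mod_cast Nat.le_self_pow two_ne_zero n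
          have : (0:ℝ) ≤ (1+r)^n := by positivity
          nlinarith
      _ ≤ K₂ * R^n := hK₂' n
  -- the key sandwich inequality
  have hkey : ∀ x y : ℝ, x ∈ Set.Icc (-c₁) c₁ → y ∈ Set.Icc (-c₁) c₁ → x < y →
      δ/2 * (y-x) ≤ G x - G y ∧ G x - G y ≤ L * (y-x) := by
    intro x y hx hy hxy
    obtain ⟨hx1, hx2⟩ := habs x hx
    obtain ⟨hy1, hy2⟩ := habs y hy
    have hx0 : 0 ≤ 1 - x := le_trans h1c₁ hx1
    have hy0 : 0 ≤ 1 - y := le_trans h1c₁ hy1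
    set φS : ℕ → ℝ := fun n => ∑ j ∈ range n, ∑ i ∈ range j, (1-x)^i * (1-y)^(j-1-i)
      with hφSdef
    -- upper pointwise bound
    have hup : ∀ n : ℕ, φS n ≤ K₂ * R^n := by
      intro n
      calc φS n ≤ ∑ j ∈ range n, ∑ i ∈ range j, (1+r)^n := by
            refine Finset.sum_le_sum fun j hj => Finset.sum_le_sum fun i hi => ?_
            have hj' : j ≤ n := (Finset.mem_range.mp hj).le
            have hi' : i < j := Finset.mem_range.mp hi
            have : i + (j - 1 - i) ≤ n := by omega
            calc (1-x)^i * (1-y)^(j-1-i) ≤ (1+r)^i * (1+r)^(j-1-i) := by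
                  exact mul_le_mul (pow_le_pow_left₀ hx0 hx2 i) (pow_le_pow_left₀ hy0 hy2 _)
                    (by positivity) (by positivity)
              _ = (1+r)^(i + (j-1-i)) := (pow_add _ _ _).symm
              _ ≤ (1+r)^n := pow_le_pow_right₀ h1r this
        _ = ∑ j ∈ range n, (j:ℝ) * (1+r)^n := by
            refine Finset.sum_congr rfl fun j _ => ?_
            rw [Finset.sum_const, Finset.card_range, nsmul_eq_mul]
        _ ≤ ∑ j ∈ range n, (n:ℝ) * (1+r)^n := by
            refine Finset.sum_le_sum fun j hj => ?_
            have : (j:ℝ) ≤ n := by exact_mod_cast (Finset.mem_range.mp hj).le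
            have h0 : (0:ℝ) ≤ (1+r)^n := by positivity
            nlinarith
        _ = (n:ℝ)^2 * (1+r)^n := by
            rw [Finset.sum_const, Finset.card_range, nsmul_eq_mul]; ring
        _ ≤ K₂ * R^n := hK₂' n
    have hnonneg : ∀ n : ℕ, 0 ≤ φS n := by
      intro n
      refine Finset.sum_nonneg fun j _ => Finset.sum_nonneg fun i _ => ?_
      positivity
    -- lower pointwise bound
    have hlow : ∀ n : ℕ, (n:ℝ)*((n:ℝ)-1)/2 - c₁ * (n:ℝ)^3 ≤ φS n := by
      intro n
      have step : ∀ j ∈ range n, (j:ℝ) - c₁ * (n:ℝ)^2 ≤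
          ∑ i ∈ range j, (1-x)^i * (1-y)^(j-1-i) := by
        intro j hj
        have hjn : j ≤ n := (Finset.mem_range.mp hj).le
        have h1 : ∑ i ∈ range j, (1-c₁)^(j-1) ≤ ∑ i ∈ range j, (1-x)^i * (1-y)^(j-1-i) := by
          refine Finset.sum_le_sum fun i hi => ?_
          have hij : i < j := Finset.mem_range.mp hi
          have he : i + (j - 1 - i) = j - 1 := by omega
          calc (1-c₁)^(j-1) = (1-c₁)^i * (1-c₁)^(j-1-i) := by rw [← pow_add, he]
            _ ≤ (1-x)^i * (1-y)^(j-1-i) :=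
                mul_le_mul (pow_le_pow_left₀ h1c₁ hx1 i) (pow_le_pow_left₀ h1c₁ hy1 _)
                  (by positivity) (by positivity)
        have h2 : (j:ℝ) * (1 - ((j:ℝ)-1) * c₁) ≤ ∑ i ∈ range j, (1-c₁)^(j-1) := by
          rw [Finset.sum_const, Finset.card_range, nsmul_eq_mul]
          have hBern : 1 + ((j-1 : ℕ):ℝ) * (-c₁) ≤ (1 + (-c₁))^(j-1) :=
            one_add_mul_le_pow (by linarith) (j-1)
          have hj0 : (0:ℝ) ≤ j := Nat.cast_nonneg j
          have hcast : ((j-1 : ℕ):ℝ) ≤ (j:ℝ) - 1 ∨ j = 0 := by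
            rcases Nat.eq_zero_or_pos j with h | h
            · exact Or.inr h
            · left; rw [Nat.cast_sub h]; norm_num
          rcases hcast with hc | hc
          · have : 1 - ((j:ℝ)-1) * c₁ ≤ (1-c₁)^(j-1) := by
              have : 1 + ((j:ℝ)-1) * (-c₁) ≤ 1 + ((j-1:ℕ):ℝ) * (-c₁) := by nlinarith
              calc 1 - ((j:ℝ)-1)*c₁ = 1 + ((j:ℝ)-1) * (-c₁) := by ring
                _ ≤ 1 + ((j-1:ℕ):ℝ) * (-c₁) := this
                _ ≤ (1 + (-c₁))^(j-1) := hBern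
                _ = (1-c₁)^(j-1) := by ring_nf
            exact mul_le_mul_of_nonneg_left this hj0
          · simp [hc]
        have h3 : (j:ℝ) - c₁ * (n:ℝ)^2 ≤ (j:ℝ) * (1 - ((j:ℝ)-1) * c₁) := by
          have hjr : (j:ℝ) ≤ n := by exact_mod_cast hjn
          have hj0 : (0:ℝ) ≤ j := Nat.cast_nonneg j
          have hjj : (j:ℝ)*((j:ℝ)-1) ≤ (n:ℝ)^2 := by nlinarith
          have := mul_le_mul_of_nonneg_left hjj hc₁0.le
          nlinarith
        linarith [h1, h2, h3]
      calc (n:ℝ)*((n:ℝ)-1)/2 - c₁ * (n:ℝ)^3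
          = ∑ j ∈ range n, ((j:ℝ) - c₁ * (n:ℝ)^2) := by
            rw [Finset.sum_sub_distrib, hY_aux_gauss, Finset.sum_const, Finset.card_range,
              nsmul_eq_mul]
            ring
        _ ≤ ∑ j ∈ range n, ∑ i ∈ range j, (1-x)^i * (1-y)^(j-1-i) :=
            Finset.sum_le_sum step
        _ = φS n := rfl
    -- integrability
    have hintS : Integrable (fun ω => φS (Y ω)) μ :=
      hintφ φS K₂ fun n => by rw [abs_of_nonneg (hnonneg n)]; exact hup n
    have hintY2 : Integrable (fun ω => (Y ω:ℝ) * ((Y ω:ℝ)-1)) μ := by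
      refine hintφ (fun n => (n:ℝ)*((n:ℝ)-1)) K₁ fun n => ?_
      have h1 : (0:ℝ) ≤ (n:ℝ)*((n:ℝ)-1) := by
        rcases Nat.eq_zero_or_pos n with h | h
        · simp [h]
        · have : (1:ℝ) ≤ n := by exact_mod_cast h
          nlinarith
      rw [abs_of_nonneg h1]
      have : (n:ℝ)*((n:ℝ)-1) ≤ (n:ℝ)^3 := by
        have hn0 : (0:ℝ) ≤ n := Nat.cast_nonneg n
        have : (n:ℝ) ≤ (n:ℝ)^2 := by exact_mod_cast Nat.le_self_pow two_ne_zero n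
        nlinarith
      linarith [hK₁' n]
    have hintY3 : Integrable (fun ω => (Y ω:ℝ)^3) μ := by
      refine hintφ (fun n => (n:ℝ)^3) K₁ fun n => ?_
      rw [abs_of_nonneg (by positivity)]; exact hK₁' n
    -- ∫ S bounds
    have hSl : δ/2 ≤ ∫ ω, φS (Y ω) ∂μ := by
      have hmono : ∫ ω, ((Y ω:ℝ)*((Y ω:ℝ)-1)/2 - c₁ * (Y ω:ℝ)^3) ∂μ ≤ ∫ ω, φS (Y ω) ∂μ := by
        refine integral_mono ((hintY2.div_const 2).sub (hintY3.const_mul c₁)) hintS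
          fun ω => ?_
        simpa using hlow (Y ω)
      have heq : ∫ ω, ((Y ω:ℝ)*((Y ω:ℝ)-1)/2 - c₁ * (Y ω:ℝ)^3) ∂μ
          = (∫ ω, (Y ω:ℝ)*((Y ω:ℝ)-1) ∂μ)/2 - c₁ * ∫ ω, (Y ω:ℝ)^3 ∂μ := by
        rw [integral_sub (hintY2.div_const 2) (hintY3.const_mul c₁), integral_div,
          integral_const_mul]
      have hY3M : ∫ ω, (Y ω:ℝ)^3 ∂μ ≤ K₁ * M := by
        calc ∫ ω, (Y ω:ℝ)^3 ∂μ ≤ ∫ ω, K₁ * R^(Y ω) ∂μ :=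
              integral_mono hintY3 (hRint.const_mul K₁) fun ω => hK₁' (Y ω)
          _ = K₁ * ∫ ω, R^(Y ω) ∂μ := integral_const_mul K₁ _
          _ ≤ K₁ * M := mul_le_mul_of_nonneg_left hRM hK₁0.le
      have hY30 : 0 ≤ ∫ ω, (Y ω:ℝ)^3 ∂μ := integral_nonneg fun ω => by positivity
      have : c₁ * ∫ ω, (Y ω:ℝ)^3 ∂μ ≤ δ/2 := by
        calc c₁ * ∫ ω, (Y ω:ℝ)^3 ∂μ ≤ c₁ * (K₁ * M) :=
              mul_le_mul_of_nonneg_left hY3M hc₁0.le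
          _ ≤ δ/2 := hc₁δ
      rw [heq] at hmono
      linarith [hYY1]
    have hSu : ∫ ω, φS (Y ω) ∂μ ≤ L := by
      calc ∫ ω, φS (Y ω) ∂μ ≤ ∫ ω, K₂ * R^(Y ω) ∂μ :=
            integral_mono hintS (hRint.const_mul K₂) fun ω => hup (Y ω)
        _ = K₂ * ∫ ω, R^(Y ω) ∂μ := integral_const_mul K₂ _
        _ ≤ K₂ * M := mul_le_mul_of_nonneg_left hRM hK₂0.le
    -- G x - G y = (y-x) * ∫ S
    have hGsub : G x - G y = (y-x) * ∫ ω, φS (Y ω) ∂μ := by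
      have h1 : G x - G y = ∫ ω, (f x ω - f y ω) ∂μ :=
        (integral_sub (hintf x hx) (hintf y hy)).symm
      have h2 : ∀ ω, f x ω - f y ω = (y-x) * φS (Y ω) := by
        intro ω
        rw [hfdef]
        simp only
        rw [← Finset.sum_sub_distrib, hφSdef, Finset.mul_sum]
        refine Finset.sum_congr rfl fun j _ => ?_
        have := geom_sum₂_mul (1-x) (1-y) j
        have he : (1-x) - (1-y) = y - x := by ring
        rw [he] at this
        rw [← this]; ring
      rw [h1]
      calc ∫ ω, (f x ω - f y ω) ∂μ = ∫ ω, (y-x) * φS (Y ω) ∂μ := by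
            exact integral_congr_ae (ae_of_all _ fun ω => h2 ω)
        _ = (y-x) * ∫ ω, φS (Y ω) ∂μ := integral_const_mul _ _
    constructor
    · rw [hGsub]
      have : 0 < y - x := by linarith
      nlinarith
    · rw [hGsub]
      have : 0 < y - x := by linarith
      nlinarith
  -- H agrees with G on the interval
  have hHG : ∀ x ∈ Set.Icc (-c₁) c₁, H x = G x := by
    intro x hx
    simp only [hH]
    by_cases hx0 : x = 0
    · rw [if_pos hx0]
      subst hx0
      rw [hmdef, hGdef]
      simp only
      congr 1
      funext ω
      simp [hfdef]
    · rw [if_neg hx0]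
      have hgeom : ∀ n : ℕ, (∑ j ∈ range n, (1-x)^j) = (1 - (1-x)^n)/x := by
        intro n
        rw [eq_div_iff hx0]
        have h := geom_sum_mul (1-x) n
        rw [show (1-x) - 1 = -x by ring, mul_neg] at h
        linarith
      have hintpow : Integrable (fun ω => (1-x)^(Y ω)) μ := by
        refine hintφ (fun n => (1-x)^n) 1 fun n => ?_
        obtain ⟨hz1, hz2⟩ := habs x hx
        have hz0 : 0 ≤ 1 - x := le_trans h1c₁ hz1
        rw [abs_pow, abs_of_nonneg hz0, one_mul]
        exact pow_le_pow_left₀ hz0 (by linarith) n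
      have : G x = (∫ ω, (1 - (1-x)^(Y ω)) ∂μ)/x := by
        rw [hGdef]
        simp only
        rw [← integral_div]
        exact integral_congr_ae (ae_of_all _ fun ω => by rw [hfdef]; exact hgeom (Y ω))
      rw [this, integral_sub (integrable_const 1) hintpow]
      simp [measure_univ]
  -- strict antitonicity, continuity
  have hmono : ∀ x ∈ Set.Icc (-c₁) c₁, ∀ y ∈ Set.Icc (-c₁) c₁, x < y → G y < G x := by
    intro x hx y hy hxy
    have h := (hkey x y hx hy hxy).1
    nlinarith
  have hcont : ContinuousOn G (Set.Icc (-c₁) c₁) := by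
    have hlip : LipschitzOnWith (Real.toNNReal L) G (Set.Icc (-c₁) c₁) := by
      rw [lipschitzOnWith_iff_dist_le_mul]
      intro x hx y hy
      rw [Real.dist_eq, Real.dist_eq, Real.coe_toNNReal L hL0.le]
      rcases lt_trichotomy x y with h | h | h
      · obtain ⟨h1, h2⟩ := hkey x y hx hy h
        rw [abs_of_nonneg (by nlinarith : (0:ℝ) ≤ G x - G y),
          abs_of_nonpos (by linarith : x - y ≤ 0)]
        nlinarith
      · simp [h]
      · obtain ⟨h1, h2⟩ := hkey y x hy hx h
        rw [abs_of_nonpos (by nlinarith : G x - G y ≤ 0),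
          abs_of_nonneg (by linarith : (0:ℝ) ≤ x - y)]
        nlinarith
    exact hlip.continuousOn
  have h0mem : (0:ℝ) ∈ Set.Icc (-c₁) c₁ := ⟨by linarith, by linarith⟩
  have hnegmem : (-c₁:ℝ) ∈ Set.Icc (-c₁) c₁ := ⟨le_refl _, by linarith⟩
  have hposmem : (c₁:ℝ) ∈ Set.Icc (-c₁) c₁ := ⟨by linarith, le_refl _⟩
  have hG0 : G 0 = m := by
    rw [hGdef, hmdef]
    simp only
    congr 1
    funext ω
    simp [hfdef]
  have hmlow : 1 - δ * c₁ / 4 < m := by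
    have := abs_lt.mp hmε
    linarith [this.1]
  have hmhigh : m < 1 + δ * c₁ / 4 := by
    have := abs_lt.mp hmε
    linarith [this.2]
  have hGneg : 1 < G (-c₁) := by
    have h := (hkey (-c₁) 0 hnegmem h0mem (by linarith)).1
    rw [hG0] at h
    nlinarith
  have hGpos : G c₁ < 1 := by
    have h := (hkey 0 c₁ h0mem hposmem (by linarith)).1
    rw [hG0] at h
    nlinarith
  -- existence of root
  obtain ⟨x₀, hx₀mem, hx₀val⟩ := intermediate_value_Icc' (by linarith : -c₁ ≤ c₁) hcont
    ⟨hGpos.le, hGneg.le⟩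
  have hx₀ne1 : x₀ ≠ -c₁ := by
    intro h; rw [h] at hx₀val; rw [hx₀val] at hGneg; exact lt_irrefl _ hGneg
  have hx₀ne2 : x₀ ≠ c₁ := by
    intro h; rw [h] at hx₀val; rw [hx₀val] at hGpos; exact lt_irrefl _ hGpos
  have hx₀abs : |x₀| < c₁ :=
    abs_lt.mpr ⟨lt_of_le_of_ne hx₀mem.1 (Ne.symm hx₀ne1), lt_of_le_of_ne hx₀mem.2 hx₀ne2⟩
  have hmemof : ∀ x : ℝ, |x| < c₁ → x ∈ Set.Icc (-c₁) c₁ := by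
    intro x hx
    have := abs_lt.mp hx
    exact ⟨this.1.le, this.2.le⟩
  have huniq : ∀ u v : ℝ, |u| < c₁ → |v| < c₁ → G u = 1 → G v = 1 → u = v := by
    intro u v hu hv hGu hGv
    rcases lt_trichotomy u v with h | h | h
    · have := hmono u (hmemof u hu) v (hmemof v hv) h
      rw [hGu, hGv] at this; exact absurd this (lt_irrefl 1)
    · exact h
    · have := hmono v (hmemof v hv) u (hmemof u hu) h
      rw [hGu, hGv] at this; exact absurd this (lt_irrefl 1)
  constructor
  · -- ∃!
    refine ⟨x₀, ⟨hx₀abs, by rw [hHG x₀ (hmemof x₀ hx₀abs)]; exact hx₀val⟩, ?_⟩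
    rintro y ⟨hy1, hy2⟩
    rw [hHG y (hmemof y hy1)] at hy2
    exact huniq y x₀ hy1 hx₀abs hy2 hx₀val
  · -- asymptotics
    intro x hxabs hHx
    have hGx : G x = 1 := by rw [← hHG x (hmemof x hxabs)]; exact hHx
    have hxmem := hmemof x hxabs
    rcases lt_trichotomy x 0 with hx | hx | hx
    · -- x < 0, m < 1
      obtain ⟨h1, h2⟩ := hkey x 0 hxmem h0mem hx
      rw [hGx, hG0] at h1 h2
      have hm1 : m < 1 := by nlinarith
      have habs1 : |x| = -x := abs_of_neg hx
      have habs2 : |m - 1| = 1 - m := by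
        rw [abs_of_neg (by linarith : m - 1 < 0)]; ring
      refine ⟨?_, ?_, ?_, ?_, ?_⟩
      · rw [habs1, habs2]
        have : 1 - m ≤ L * (-x) := by linarith
        calc (1/L) * (1-m) ≤ (1/L) * (L * (-x)) :=
            mul_le_mul_of_nonneg_left this (by positivity)
          _ = -x := by field_simp; try ring
      · rw [habs1, habs2]
        have : δ/2 * (-x) ≤ 1 - m := by linarith
        calc -x = (2/δ) * (δ/2 * (-x)) := by field_simp; try ring
          _ ≤ (2/δ) * (1-m) := mul_le_mul_of_nonneg_left this (by positivity)
      · constructor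
        · intro h; linarith
        · intro h; linarith
      · exact ⟨fun _ => hm1, fun _ => hx⟩
      · constructor
        · intro h; linarith
        · intro h; linarith
    · -- x = 0, m = 1
      have hm1 : m = 1 := by rw [← hG0, ← hGx, hx]
      subst hx
      simp [hm1]
    · -- 0 < x, 1 < m
      obtain ⟨h1, h2⟩ := hkey 0 x h0mem hxmem hx
      rw [hGx, hG0] at h1 h2
      have hm1 : 1 < m := by nlinarith
      have habs1 : |x| = x := abs_of_pos hx
      have habs2 : |m - 1| = m - 1 := abs_of_pos (by linarith)
      refine ⟨?_, ?_, ?_, ?_, ?_⟩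
      · rw [habs1, habs2]
        have : m - 1 ≤ L * x := by linarith
        calc (1/L) * (m-1) ≤ (1/L) * (L * x) :=
            mul_le_mul_of_nonneg_left this (by positivity)
          _ = x := by field_simp; try ring
      · rw [habs1, habs2]
        have : δ/2 * x ≤ m - 1 := by linarith
        calc x = (2/δ) * (δ/2 * x) := by field_simp; try ring
          _ ≤ (2/δ) * (m-1) := mul_le_mul_of_nonneg_left this (by positivity)
      · exact ⟨fun _ => hm1, fun _ => hx⟩
      · constructor
        · intro h; linarith
        · intro h; linarith
      · constructor
        · intro h; linarith
        · intro h; linarith
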